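/- Let μ₁,...,μₙ : K' → M be simplicial maps with μᵢ ∼ μ_{i+1} for all i, each admitting a common left strong homotopy inverse β : M → K' (i.e., β ∘ μᵢ ∼ id_{K'} for all i). Then for any simplicial maps φ₁,...,φₙ : K → K', SD(μ₁∘φ₁,...,μₙ∘φₙ) = SD(φ₁,...,φₙ). -/

import Mathlib

/-- An abstract simplicial complex on vertex type `V`. -/
structure ASC (V : Type) where
  faces : Set (Finset V)
  nonempty_of_mem : ∀ {s : Finset V}, s ∈ faces → s.Nonempty
  down_closed : ∀ {s t : Finset V}, s ∈ faces → t ⊆ s → t.Nonempty → t ∈ faces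

/-- A simplicial map between abstract simplicial complexes. -/
structure SMap {V W : Type} [DecidableEq W] (K : ASC V) (L : ASC W) where
  toFun : V → W
  maps_faces : ∀ {s : Finset V}, s ∈ K.faces → s.image toFun ∈ L.faces

namespace SMap

variable {V W U : Type} [DecidableEq V] [DecidableEq W] [DecidableEq U]
  {K : ASC V} {L : ASC W} {M : ASC U}

/-- The identity simplicial map. -/
def id (K : ASC V) : SMap K K :=
  ⟨fun v => v, by intro s hs; simpa using hs⟩

/-- Composition of simplicial maps. -/
def comp (ψ : SMap L M) (φ : SMap K L) : SMap K M :=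
  ⟨ψ.toFun ∘ φ.toFun, by
    intro s hs
    have h := ψ.maps_faces (φ.maps_faces hs)
    simpa [Finset.image_image] using h⟩

end SMap

/-- Two simplicial maps are contiguous if the images of each simplex under the two
maps together span a simplex. -/
def Contiguous {V W : Type} [DecidableEq W] {K : ASC V} {L : ASC W}
    (φ ψ : SMap K L) : Prop :=
  ∀ {s : Finset V}, s ∈ K.faces → (s.image φ.toFun ∪ s.image ψ.toFun) ∈ L.faces

/-- Being in the same contiguity class: the reflexive-transitive closure of
contiguity (`φ ∼ ψ`). -/
def CClass {V W : Type} [DecidableEq W] {K : ASC V} {L : ASC W}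
    (φ ψ : SMap K L) : Prop :=
  Relation.ReflTransGen Contiguous φ ψ

/-- The type of subcomplexes of `K`. -/
def ASC.Sub {V : Type} (K : ASC V) : Type :=
  {Ω : ASC V // Ω.faces ⊆ K.faces}

/-- Restriction of a simplicial map to a subcomplex of the domain. -/
def SMap.restrict {V W : Type} [DecidableEq W] {K : ASC V} {L : ASC W}
    (φ : SMap K L) (Ω : K.Sub) : SMap Ω.1 L :=
  ⟨φ.toFun, by intro s hs; exact φ.maps_faces (Ω.2 hs)⟩

/-- `SDle φ k` : the family `φ` has contiguity distance at most `k`, witnessed by a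
cover of `K` by `k+1` subcomplexes on each of which all the maps restrict into a
single contiguity class. -/
def SDle {V W : Type} [DecidableEq W] {K : ASC V} {L : ASC W} {n : ℕ}
    (φ : Fin n → SMap K L) (k : ℕ) : Prop :=
  ∃ Ω : Fin (k + 1) → K.Sub,
    (∀ s ∈ K.faces, ∃ j, s ∈ (Ω j).1.faces) ∧
    ∀ j i i', CClass ((φ i).restrict (Ω j)) ((φ i').restrict (Ω j))

/-- The `n`-th contiguity distance `SD(φ₁,…,φₙ)`, valued in `ℕ∞`. -/
noncomputable def SD {V W : Type} [DecidableEq W] {K : ASC V} {L : ASC W} {n : ℕ}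
    (φ : Fin n → SMap K L) : ℕ∞ :=
  sInf {m : ℕ∞ | ∃ k : ℕ, m = (k : ℕ∞) ∧ SDle φ k}

/-- `v` is a vertex of `K`. -/
def ASC.isVertex {V : Type} (K : ASC V) (v : V) : Prop :=
  ({v} : Finset V) ∈ K.faces

/-- The constant simplicial map at a vertex `v` of `L`. -/
def constMap {V W : Type} [DecidableEq W] (K : ASC V) (L : ASC W) {v : W}
    (hv : L.isVertex v) : SMap K L :=
  ⟨fun _ => v, by
    intro s hs
    rw [Finset.image_const (K.nonempty_of_mem hs) v]
    exact hv⟩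

/-- The inclusion of a subcomplex. -/
def incl {V : Type} [DecidableEq V] {K : ASC V} (Ω : K.Sub) : SMap Ω.1 K :=
  ⟨fun x => x, by intro s hs; simpa using Ω.2 hs⟩

/-- A subcomplex is categorical if its inclusion is in the same contiguity class
as a constant map. -/
def Categorical {V : Type} [DecidableEq V] {K : ASC V} (Ω : K.Sub) : Prop :=
  ∃ v : V, ∃ hv : K.isVertex v, CClass (incl Ω) (constMap Ω.1 K hv)

/-- `scatle K k` : `K` is covered by `k+1` categorical subcomplexes. -/
def scatle {V : Type} [DecidableEq V] (K : ASC V) (k : ℕ) : Prop :=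
  ∃ Ω : Fin (k + 1) → K.Sub,
    (∀ s ∈ K.faces, ∃ j, s ∈ (Ω j).1.faces) ∧ ∀ j, Categorical (Ω j)

/-- The simplicial Lusternik–Schnirelmann category, valued in `ℕ∞`. -/
noncomputable def scat {V : Type} [DecidableEq V] (K : ASC V) : ℕ∞ :=
  sInf {m : ℕ∞ | ∃ k : ℕ, m = (k : ℕ∞) ∧ scatle K k}

/-- The `n`-fold categorical product `Kⁿ`. -/
def ASC.prodPow {V : Type} [DecidableEq V] (K : ASC V) (n : ℕ) : ASC (Fin n → V) where
  faces := {s | s.Nonempty ∧ ∀ i : Fin n, s.image (fun f => f i) ∈ K.faces}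
  nonempty_of_mem := fun h => h.1
  down_closed := by
    intro s t hs hts ht
    refine ⟨ht, fun i => ?_⟩
    exact K.down_closed (hs.2 i) (Finset.image_subset_image (f := fun f => f i) hts)
      (ht.image _)

/-- Projection to the `i`-th factor of the categorical product. -/
def proj {V : Type} [DecidableEq V] (K : ASC V) (n : ℕ) (i : Fin n) :
    SMap (K.prodPow n) K :=
  ⟨fun f => f i, by intro s hs; exact hs.2 i⟩

/-- The diagonal simplicial map `K → Kⁿ`. -/
def diag {V : Type} [DecidableEq V] (K : ASC V) (n : ℕ) : SMap K (K.prodPow n) :=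
  ⟨fun v _ => v, by
    intro s hs
    refine ⟨(K.nonempty_of_mem hs).image _, fun i => ?_⟩
    have h : (s.image fun v (_ : Fin n) => v).image (fun f => f i) = s := by
      rw [Finset.image_image]
      exact Finset.image_id'
    rw [h]; exact hs⟩

/-- A subcomplex `Ω ⊆ Kⁿ` is `n`-Farber if the diagonal admits a section over `Ω`
up to contiguity class. -/
def IsFarber {V : Type} [DecidableEq V] {K : ASC V} {n : ℕ}
    (Ω : (K.prodPow n).Sub) : Prop :=
  ∃ σ : SMap Ω.1 K, CClass ((diag K n).comp σ) (incl Ω)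

/-- `dTCle K n k` : `Kⁿ` is covered by `k+1` `n`-Farber subcomplexes. -/
def dTCle {V : Type} [DecidableEq V] (K : ASC V) (n k : ℕ) : Prop :=
  ∃ Ω : Fin (k + 1) → (K.prodPow n).Sub,
    (∀ s ∈ (K.prodPow n).faces, ∃ j, s ∈ (Ω j).1.faces) ∧ ∀ j, IsFarber (Ω j)

/-- The `n`-th discrete topological complexity, valued in `ℕ∞`. -/
noncomputable def dTC {V : Type} [DecidableEq V] (K : ASC V) (n : ℕ) : ℕ∞ :=
  sInf {m : ℕ∞ | ∃ k : ℕ, m = (k : ℕ∞) ∧ dTCle K n k}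

/-- `K` is edge-path connected: any two vertices are joined by a finite edge path. -/
def ASC.EPConn {V : Type} [DecidableEq V] (K : ASC V) : Prop :=
  ∀ u v : V, K.isVertex u → K.isVertex v →
    Relation.ReflTransGen (fun a b => ({a, b} : Finset V) ∈ K.faces) u v

/-- `K` is strongly collapsible: the identity is in the same contiguity class as a
constant map. -/
def StronglyCollapsible {V : Type} [DecidableEq V] (K : ASC V) : Prop :=
  ∃ v : V, ∃ hv : K.isVertex v, CClass (SMap.id K) (constMap K K hv)

/-- `μ` is a right strong equivalence: it has a right strong homotopy inverse. -/
def RightStrongEq {V W : Type} [DecidableEq V] [DecidableEq W]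
    {K : ASC V} {L : ASC W} (μ : SMap K L) : Prop :=
  ∃ α : SMap L K, CClass (μ.comp α) (SMap.id L)

/-- `μ` is a left strong equivalence: it has a left strong homotopy inverse. -/
def LeftStrongEq {V W : Type} [DecidableEq V] [DecidableEq W]
    {K : ASC V} {L : ASC W} (μ : SMap K L) : Prop :=
  ∃ β : SMap L K, CClass (β.comp μ) (SMap.id K)

/-- The barycentric subdivision of `K`: vertices are the simplices of `K`, and
simplices are chains of simplices of `K`. -/
def ASC.sd {V : Type} (K : ASC V) : ASC (Finset V) where
  faces := {S | S.Nonempty ∧ (∀ σ ∈ S, σ ∈ K.faces) ∧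
    ∀ σ ∈ S, ∀ τ ∈ S, σ ⊆ τ ∨ τ ⊆ σ}
  nonempty_of_mem := fun h => h.1
  down_closed := fun hS hTS hT =>
    ⟨hT, fun σ hσ => hS.2.1 σ (hTS hσ), fun σ hσ τ hτ => hS.2.2 σ (hTS hσ) τ (hTS hτ)⟩

/-- The induced simplicial map on barycentric subdivisions. -/
def SMap.sd {V W : Type} [DecidableEq V] [DecidableEq W] {K : ASC V} {L : ASC W}
    (φ : SMap K L) : SMap K.sd L.sd :=
  ⟨fun σ => σ.image φ.toFun, by
    intro S hS
    refine ⟨hS.1.image _, ?_, ?_⟩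
    · intro τ hτ
      simp only [Finset.mem_image] at hτ
      obtain ⟨σ, hσ, rfl⟩ := hτ
      exact φ.maps_faces (hS.2.1 σ hσ)
    · intro τ₁ h₁ τ₂ h₂
      simp only [Finset.mem_image] at h₁ h₂
      obtain ⟨σ₁, hσ₁, rfl⟩ := h₁
      obtain ⟨σ₂, hσ₂, rfl⟩ := h₂
      rcases hS.2.2 σ₁ hσ₁ σ₂ hσ₂ with h | h
      · exact Or.inl (Finset.image_subset_image h)
      · exact Or.inr (Finset.image_subset_image h)⟩


section Aux

variable {U V W : Type} [DecidableEq U] [DecidableEq W]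
  {K : ASC V} {L : ASC W} {M : ASC U}

theorem SMap.ext' {φ ψ : SMap K L} (h : φ.toFun = ψ.toFun) : φ = ψ := by
  cases φ; cases ψ; simp_all

theorem Contiguous.symm' {φ ψ : SMap K L} (h : Contiguous φ ψ) : Contiguous ψ φ := by
  intro s hs
  have := h hs
  rwa [Finset.union_comm] at this

theorem CClass.symm' {φ ψ : SMap K L} (h : CClass φ ψ) : CClass ψ φ :=
  (@Relation.ReflTransGen.stdSymm _ _ ⟨fun _ _ => Contiguous.symm'⟩).symm _ _ h

theorem CClass.trans' {φ ψ χ : SMap K L} (h : CClass φ ψ) (h' : CClass ψ χ) :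
    CClass φ χ := Relation.ReflTransGen.trans h h'

theorem Contiguous.precomp {ψ ψ' : SMap L M} (h : Contiguous ψ ψ') (φ : SMap K L) :
    Contiguous (ψ.comp φ) (ψ'.comp φ) := by
  intro s hs
  have := h (φ.maps_faces hs)
  simpa [SMap.comp, Finset.image_image, Function.comp] using this

theorem Contiguous.postcomp {φ φ' : SMap K L} (h : Contiguous φ φ') (ψ : SMap L M) :
    Contiguous (ψ.comp φ) (ψ.comp φ') := by
  intro s hs
  have := ψ.maps_faces (h hs)
  simpa [SMap.comp, Finset.image_union, Finset.image_image, Function.comp] using this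

theorem CClass.precomp {ψ ψ' : SMap L M} (h : CClass ψ ψ') (φ : SMap K L) :
    CClass (ψ.comp φ) (ψ'.comp φ) := by
  induction h with
  | refl => exact Relation.ReflTransGen.refl
  | tail _ hc ih => exact ih.tail (hc.precomp φ)

theorem CClass.postcomp {φ φ' : SMap K L} (h : CClass φ φ') (ψ : SMap L M) :
    CClass (ψ.comp φ) (ψ.comp φ') := by
  induction h with
  | refl => exact Relation.ReflTransGen.refl
  | tail _ hc ih => exact ih.tail (hc.postcomp ψ)

theorem restrict_comp (ψ : SMap L M) (φ : SMap K L) (Ω : K.Sub) :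
    (ψ.comp φ).restrict Ω = ψ.comp (φ.restrict Ω) := rfl

theorem comp_assoc' {X : Type} [DecidableEq X] {N : ASC X}
    (χ : SMap M N) (ψ : SMap L M) (φ : SMap K L) :
    (χ.comp ψ).comp φ = χ.comp (ψ.comp φ) := rfl

theorem id_comp' (φ : SMap K L) : (SMap.id L).comp φ = φ := by
  apply SMap.ext'; rfl

end Aux

theorem mu_cclass {U W : Type} [DecidableEq U] [DecidableEq W]
    {L : ASC W} {M : ASC U} {n : ℕ}
    (μ : Fin n → SMap L M)
    (hμ : ∀ (i : ℕ) (h : i + 1 < n),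
      CClass (μ ⟨i, Nat.lt_of_succ_lt h⟩) (μ ⟨i + 1, h⟩)) :
    ∀ i j : Fin n, CClass (μ i) (μ j) := by
  have key : ∀ b : ℕ, ∀ (hb : b < n) (a : ℕ) (ha : a < n), a ≤ b →
      CClass (μ ⟨a, ha⟩) (μ ⟨b, hb⟩) := by
    intro b
    induction b with
    | zero =>
      intro hb a ha hab
      interval_cases a
      exact Relation.ReflTransGen.refl
    | succ m ih =>
      intro hb a ha hab
      rcases Nat.lt_or_ge a (m + 1) with h | h
      · exact (ih (Nat.lt_of_succ_lt hb) a ha (Nat.lt_succ_iff.mp h)).trans' (hμ m hb)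
      · have : a = m + 1 := le_antisymm hab h
        subst this
        exact Relation.ReflTransGen.refl
  intro i j
  rcases le_total i.1 j.1 with h | h
  · have := key j.1 j.2 i.1 i.2 h
    simpa using this
  · have := key i.1 i.2 j.1 j.2 h
    simpa using this.symm'

/-- postcomposing with maps `μᵢ` in one contiguity class admitting a
common left strong homotopy inverse preserves `SD`. -/
theorem SD_postcomp_left_strong_eq {U V W : Type} [DecidableEq U] [DecidableEq W]
    {K : ASC V} {L : ASC W} {M : ASC U} {n : ℕ}
    (μ : Fin n → SMap L M)
    (hμ : ∀ (i : ℕ) (h : i + 1 < n),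
      CClass (μ ⟨i, Nat.lt_of_succ_lt h⟩) (μ ⟨i + 1, h⟩))
    (β : SMap M L) (hβ : ∀ i, CClass (β.comp (μ i)) (SMap.id L))
    (φ : Fin n → SMap K L) :
    SD (fun i => (μ i).comp (φ i)) = SD φ := by
  have key : ∀ k, SDle (fun i => (μ i).comp (φ i)) k ↔ SDle φ k := by
    intro k
    constructor
    · rintro ⟨Ω, hcov, hcc⟩
      refine ⟨Ω, hcov, fun j i i' => ?_⟩
      have h1 : CClass (((μ i).comp (φ i)).restrict (Ω j))
          (((μ i').comp (φ i')).restrict (Ω j)) := hcc j i i'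
      rw [restrict_comp, restrict_comp] at h1
      have h2 := h1.postcomp β
      rw [← comp_assoc', ← comp_assoc'] at h2
      have h3 : CClass ((β.comp (μ i)).comp ((φ i).restrict (Ω j)))
          ((φ i).restrict (Ω j)) := by
        have := (hβ i).precomp ((φ i).restrict (Ω j))
        rwa [id_comp'] at this
      have h4 : CClass ((β.comp (μ i')).comp ((φ i').restrict (Ω j)))
          ((φ i').restrict (Ω j)) := by
        have := (hβ i').precomp ((φ i').restrict (Ω j))
        rwa [id_comp'] at this
      exact (h3.symm'.trans' h2).trans' h4
    · rintro ⟨Ω, hcov, hcc⟩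
      refine ⟨Ω, hcov, fun j i i' => ?_⟩
      rw [restrict_comp, restrict_comp]
      have h1 : CClass ((μ i).comp ((φ i).restrict (Ω j)))
          ((μ i).comp ((φ i').restrict (Ω j))) := (hcc j i i').postcomp (μ i)
      have h2 : CClass ((μ i).comp ((φ i').restrict (Ω j)))
          ((μ i').comp ((φ i').restrict (Ω j))) :=
        (mu_cclass μ hμ i i').precomp ((φ i').restrict (Ω j))
      exact h1.trans' h2
  unfold SD
  congr 1
  ext m
  simp only [Set.mem_setOf_eq]
  exact exists_congr fun k => and_congr_right fun _ => key k
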